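/- For every complex x with x ≠ 0 and x ≠ −1, one has R₁₂(x) R₁₃(x+1) R₂₃(1) = (1 − (P₁₂ + P₁₃) x⁻¹)(1 − P₂₃) as operators on (ℂⁿ)^{⊗3}; in particular, composed on the right with 1 − P₂₃, the product R₁₂(x) R₁₃(x+1) has no pole at x = −1. -/

import Mathlib

noncomputable section
open scoped Kronecker
open Matrix

/-- Square matrices acting on the tensor power `(ℂⁿ)^{⊗ι}`, modelled on the
function basis `ι → Fin n`. -/
abbrev TMat (ι : Type) (n : ℕ) := Matrix (ι → Fin n) (ι → Fin n) ℂ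

/-- The matrix units `E_{ij}` of `End(ℂⁿ)`. -/
def matE (n : ℕ) (i j : Fin n) : Matrix (Fin n) (Fin n) ℂ := Matrix.single i j 1

/-- The flip `P = Σ E_{ij} ⊗ E_{ji}` on `ℂⁿ ⊗ ℂⁿ`. -/
def flipP (n : ℕ) : Matrix (Fin n × Fin n) (Fin n × Fin n) ℂ :=
  ∑ i : Fin n, ∑ j : Fin n, matE n i j ⊗ₖ matE n j i

/-- `P̄ = Σ E_{ij} ⊗ E_{ij}` on `ℂⁿ ⊗ ℂⁿ`. -/
def PbarM (n : ℕ) : Matrix (Fin n × Fin n) (Fin n × Fin n) ℂ :=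
  ∑ i : Fin n, ∑ j : Fin n, matE n i j ⊗ₖ matE n i j

/-- The conjugate `X̃ = G⁻¹ Xᵀ G` of `X` relative to the bilinear form with
Gram matrix `G`, i.e. `⟨X u, v⟩ = ⟨u, X̃ v⟩` where `⟨u, v⟩ = uᵀ G v`. -/
def conjF {n : ℕ} (G X : Matrix (Fin n) (Fin n) ℂ) : Matrix (Fin n) (Fin n) ℂ :=
  G⁻¹ * Xᵀ * G

/-- `P̃ = Σ Ẽ_{ij} ⊗ E_{ji}`. -/
def PtilM (n : ℕ) (G : Matrix (Fin n) (Fin n) ℂ) : Matrix (Fin n × Fin n) (Fin n × Fin n) ℂ :=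
  ∑ i : Fin n, ∑ j : Fin n, conjF G (matE n i j) ⊗ₖ matE n j i

/-- `P̂ = Σ Ẽ_{ij} ⊗ E_{ij}`. -/
def PhatM (n : ℕ) (G : Matrix (Fin n) (Fin n) ℂ) : Matrix (Fin n × Fin n) (Fin n × Fin n) ℂ :=
  ∑ i : Fin n, ∑ j : Fin n, conjF G (matE n i j) ⊗ₖ matE n i j

/-- The Yang R-matrix `R(x) = 1 − P x⁻¹`. -/
def Rm (n : ℕ) (x : ℂ) : Matrix (Fin n × Fin n) (Fin n × Fin n) ℂ := 1 - x⁻¹ • flipP n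

/-- `R̄(x) = 1 − P̄ x⁻¹`. -/
def RbarM (n : ℕ) (x : ℂ) : Matrix (Fin n × Fin n) (Fin n × Fin n) ℂ := 1 - x⁻¹ • PbarM n

/-- `R̃(x) = 1 − P̃ x⁻¹`. -/
def RtilM (n : ℕ) (G : Matrix (Fin n) (Fin n) ℂ) (x : ℂ) :
    Matrix (Fin n × Fin n) (Fin n × Fin n) ℂ := 1 - x⁻¹ • PtilM n G

/-- `R̂(x) = 1 − P̂ x⁻¹`. -/
def RhatM (n : ℕ) (G : Matrix (Fin n) (Fin n) ℂ) (x : ℂ) :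
    Matrix (Fin n × Fin n) (Fin n × Fin n) ℂ := 1 - x⁻¹ • PhatM n G

/-- `Z_{ij}` : the operator on a tensor power of `ℂⁿ` acting as the two-factor
operator `Z` in the `i`-th and `j`-th tensor factors and as the identity elsewhere. -/
def lift2 {n : ℕ} {ι : Type} [Fintype ι] [DecidableEq ι] (i j : ι)
    (Z : Matrix (Fin n × Fin n) (Fin n × Fin n) ℂ) : TMat ι n :=
  fun f g => Z (f i, f j) (g i, g j) *
    ∏ p : ι, if p = i ∨ p = j then 1 else (if f p = g p then 1 else 0)

lemma flipP_apply (n : ℕ) (a b c d : Fin n) :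
    flipP n (a,b) (c,d) = if a = d ∧ b = c then 1 else 0 := by
  simp only [flipP, Matrix.sum_apply, Matrix.kroneckerMap_apply, matE, Matrix.single,
    Matrix.of_apply]
  rw [Finset.sum_eq_single a, Finset.sum_eq_single c] <;> aesop

noncomputable def permM (n : ℕ) (σ : Equiv.Perm (Fin 3)) : TMat (Fin 3) n :=
  fun f g => if f = g ∘ σ then 1 else 0

lemma permM_mul (n : ℕ) (σ τ : Equiv.Perm (Fin 3)) :
    permM n σ * permM n τ = permM n (τ * σ) := by
  ext f g
  simp only [permM, Matrix.mul_apply]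
  rw [Finset.sum_eq_single (g ∘ τ)]
  · have : g ∘ ⇑τ ∘ ⇑σ = g ∘ ⇑(τ * σ) := rfl
    simp [Function.comp_assoc, this]
  · intro h _ hh; simp [hh]
  · simp

lemma permM_one (n : ℕ) : permM n 1 = 1 := by
  ext f g
  simp [permM, Matrix.one_apply, eq_comm]

lemma lift2_flipP (n : ℕ) (i j : Fin 3) (hij : i ≠ j) :
    lift2 i j (flipP n) = permM n (Equiv.swap i j) := by
  ext f g
  simp only [lift2, permM, flipP_apply]
  rcases eq_or_ne f (g ∘ Equiv.swap i j) with h | h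
  · subst h
    simp [Function.comp, Equiv.swap_apply_left, Equiv.swap_apply_right, hij,
      Finset.prod_ite_eq]
    rw [Finset.prod_eq_one]
    intro p _
    rcases eq_or_ne p i with rfl|hpi
    · simp
    rcases eq_or_ne p j with rfl|hpj
    · simp
    · simp [hpi, hpj, Equiv.swap_apply_of_ne_of_ne hpi hpj]
  · simp only [h, if_neg h]
    by_cases h1 : f i = g j ∧ f j = g i
    · have : ∃ p, p ≠ i ∧ p ≠ j ∧ f p ≠ g p := by
        by_contra hc
        push_neg at hc
        apply h
        funext p
        rcases eq_or_ne p i with rfl|hpi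
        · simpa [Equiv.swap_apply_left] using h1.1
        rcases eq_or_ne p j with rfl|hpj
        · simpa [Equiv.swap_apply_right] using h1.2
        · simpa [Equiv.swap_apply_of_ne_of_ne hpi hpj] using hc p hpi hpj
      obtain ⟨p, hpi, hpj, hfp⟩ := this
      rw [Finset.prod_eq_zero (Finset.mem_univ p)]
      · simp
      · simp [hpi, hpj, hfp]
    · rw [if_neg (by tauto), zero_mul]; simp

lemma lift2_one (n : ℕ) (i j : Fin 3) (hij : i ≠ j) :
    lift2 i j (1 : Matrix (Fin n × Fin n) (Fin n × Fin n) ℂ) = 1 := by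
  ext f g
  simp only [lift2, Matrix.one_apply, Prod.mk.injEq]
  rcases eq_or_ne f g with rfl | h
  · simp
  · simp only [Matrix.one_apply, if_neg h]
    by_cases h1 : f i = g i ∧ f j = g j
    · have : ∃ p, p ≠ i ∧ p ≠ j ∧ f p ≠ g p := by
        by_contra hc
        push_neg at hc
        exact h (funext fun p => by
          rcases eq_or_ne p i with rfl|hpi
          · exact h1.1
          rcases eq_or_ne p j with rfl|hpj
          · exact h1.2
          · exact hc p hpi hpj)
      obtain ⟨p, hpi, hpj, hfp⟩ := this
      rw [Finset.prod_eq_zero (Finset.mem_univ p)]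
      · simp
      · simp [hpi, hpj, hfp]
    · rw [if_neg (by tauto), zero_mul]

lemma lift2_Rm (n : ℕ) (x : ℂ) (i j : Fin 3) (hij : i ≠ j) :
    lift2 i j (Rm n x) = 1 - x⁻¹ • lift2 i j (flipP n) := by
  have h1 := lift2_one n i j hij
  ext f g
  rw [Matrix.sub_apply, Matrix.smul_apply, smul_eq_mul]
  have h2 : lift2 i j (Rm n x) f g
      = lift2 i j (1 : Matrix (Fin n × Fin n) (Fin n × Fin n) ℂ) f g
        - x⁻¹ * lift2 i j (flipP n) f g := by
    simp only [lift2, Rm, Matrix.sub_apply, Matrix.smul_apply, smul_eq_mul]; ring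
  rw [h2, h1]

/-- `R₁₂(x) R₁₃(x+1) R₂₃(1) = (1 − (P₁₂ + P₁₃) x⁻¹)(1 − P₂₃)` on `(ℂⁿ)^{⊗3}`. -/
theorem stmt6 (n : ℕ) (hn : 1 ≤ n) (x : ℂ) (hx : x ≠ 0) (hx' : x ≠ -1) :
    lift2 (0 : Fin 3) 1 (Rm n x) * lift2 (0 : Fin 3) 2 (Rm n (x + 1)) *
      lift2 (1 : Fin 3) 2 (Rm n 1)
  = (1 - x⁻¹ • (lift2 (0 : Fin 3) 1 (flipP n) + lift2 (0 : Fin 3) 2 (flipP n))) *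
      (1 - lift2 (1 : Fin 3) 2 (flipP n)) := by
  have hx1 : x + 1 ≠ 0 := fun h => hx' (by linear_combination h)
  set A := lift2 (0 : Fin 3) 1 (flipP n) with hA
  set B := lift2 (0 : Fin 3) 2 (flipP n) with hB
  set C := lift2 (1 : Fin 3) 2 (flipP n) with hC
  have hAB : A * B = B * C := by
    rw [hA, hB, hC, lift2_flipP n 0 1 (by decide), lift2_flipP n 0 2 (by decide),
      lift2_flipP n 1 2 (by decide), permM_mul, permM_mul,
      show (Equiv.swap (0:Fin 3) 2 * Equiv.swap 0 1) = Equiv.swap 1 2 * Equiv.swap 0 2 from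
        by decide]
  have hCC : C * C = 1 := by
    rw [hC, lift2_flipP n 1 2 (by decide), permM_mul]
    rw [Equiv.swap_mul_self, permM_one]
  rw [lift2_Rm n x 0 1 (by decide), lift2_Rm n (x+1) 0 2 (by decide),
    lift2_Rm n 1 1 2 (by decide)]
  rw [← hA, ← hB, ← hC, inv_one, one_smul]
  have hab : x⁻¹ * (x+1)⁻¹ = x⁻¹ - (x+1)⁻¹ := by
    rw [inv_sub_inv hx hx1, add_sub_cancel_left, one_div, mul_inv]
  have h1 : (1 - x⁻¹•A)*(1 - (x+1)⁻¹•B)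
      = (1 - x⁻¹•(A+B)) + (x⁻¹-(x+1)⁻¹)•(B + A*B) := by
    simp only [mul_sub, sub_mul, mul_one, one_mul, smul_mul_assoc, mul_smul_comm, smul_smul,
      smul_add, sub_smul, smul_sub]
    match_scalars <;> (field_simp; try ring)
  have h2 : (B + A*B)*(1-C) = 0 := by
    rw [hAB]
    simp only [add_mul, mul_sub, mul_one, mul_assoc, hCC]
    abel
  rw [h1, add_mul, smul_mul_assoc, h2, smul_zero, add_zero]
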